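/- Let 𝒱 be the v-transform with fulcrum δ ∈ (0,1) and generator Ψ, where Ψ is differentiable on (0,1) with strictly positive derivative, and let Δ be its conditional down probability. Then ∫₀¹ Δ(v) dv = δ; equivalently, if V is uniformly distributed on [0,1] then E[Δ(V)] = δ. -/

import Mathlib

/-!
STATEMENT 3: the conditional down probability integrates to the fulcrum:
`∫₀¹ Δ(v) dv = δ`; equivalently `E[Δ(V)] = δ` for `V` uniform on `[0,1]`.
-/

open Set MeasureTheory

/-- The v-transform with fulcrum `δ` and generator `Ψ` (with inverse `Ψinv`):
`𝒱(u) = (1-u) - (1-δ)·Ψ(u/δ)` for `u ≤ δ` and `𝒱(u) = u - δ·Ψinv((1-u)/(1-δ))`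
for `u > δ`. -/
noncomputable def vt (δ : ℝ) (Ψ Ψinv : ℝ → ℝ) (u : ℝ) : ℝ :=
  if u ≤ δ then (1 - u) - (1 - δ) * Ψ (u / δ)
  else u - δ * Ψinv ((1 - u) / (1 - δ))

/-- Left-branch inverse `𝒱⁻¹(v) = inf {u ∈ [0,1] : 𝒱 u = v}`. -/
noncomputable def vtInv (V : ℝ → ℝ) (v : ℝ) : ℝ :=
  sInf {u | u ∈ Set.Icc (0:ℝ) 1 ∧ V u = v}

/-- Conditional down probability `Δ(v) = -1 / 𝒱′(𝒱⁻¹(v))`. -/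
noncomputable def vtDelta (V : ℝ → ℝ) (v : ℝ) : ℝ :=
  -1 / deriv V (vtInv V v)

/-- Stochastic inversion function of a v-transform:
`𝒱⁻¹ₛ(v,w) = 𝒱⁻¹(v)` if `w ≤ Δ(v)`, and `v + 𝒱⁻¹(v)` otherwise. -/
noncomputable def vtSInv (V : ℝ → ℝ) (v w : ℝ) : ℝ :=
  if w ≤ vtDelta V v then vtInv V v else v + vtInv V v

theorem stmt_3
    (δ : ℝ) (hδ : δ ∈ Set.Ioo (0:ℝ) 1) (Ψ Ψinv : ℝ → ℝ)
    (hΨc : ContinuousOn Ψ (Set.Icc 0 1)) (hΨm : StrictMonoOn Ψ (Set.Icc 0 1))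
    (hΨ0 : Ψ 0 = 0) (hΨ1 : Ψ 1 = 1)
    (hΨinv : ∀ x ∈ Set.Icc (0:ℝ) 1, Ψinv (Ψ x) = x ∧ Ψ (Ψinv x) = x)
    (hΨd : ∀ x ∈ Set.Ioo (0:ℝ) 1, DifferentiableAt ℝ Ψ x ∧ 0 < deriv Ψ x)
    :
    (∫ v in Set.Icc (0:ℝ) 1, vtDelta (vt δ Ψ Ψinv) v) = δ ∧
    ∀ (Ω : Type) [MeasurableSpace Ω] (P : Measure Ω), IsProbabilityMeasure P →
      ∀ V : Ω → ℝ, Measurable V →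
        Measure.map V P = volume.restrict (Set.Icc (0:ℝ) 1) →
        ∫ ω, vtDelta (vt δ Ψ Ψinv) (V ω) ∂P = δ := by
  obtain ⟨hδ0, hδ1⟩ := hδ
  have hδne : δ ≠ 0 := ne_of_gt hδ0
  set W : ℝ → ℝ := vt δ Ψ Ψinv with hWdef
  set L : ℝ → ℝ := fun u => (1 - u) - (1 - δ) * Ψ (u / δ) with hLdef
  set D : ℝ → ℝ := fun u => -1 - (1 - δ) * (deriv Ψ (u / δ) * (1 / δ)) with hDdef
  have hWL : ∀ u, u ≤ δ → W u = L u := by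
    intro u hu; simp [hWdef, vt, hu, hLdef]
  have hL0 : L 0 = 1 := by simp [hLdef, hΨ0]
  have hLδ : L δ = 0 := by
    simp [hLdef, div_self hδne, hΨ1]
  have hmap01 : Set.MapsTo (fun u : ℝ => u / δ) (Set.Icc 0 δ) (Set.Icc 0 1) := by
    intro u hu; exact ⟨div_nonneg hu.1 hδ0.le, (div_le_one hδ0).2 hu.2⟩
  have hLc : ContinuousOn L (Set.Icc 0 δ) := by
    have h1 : ContinuousOn (fun u : ℝ => Ψ (u / δ)) (Set.Icc 0 δ) :=
      hΨc.comp (continuous_id.div_const δ).continuousOn hmap01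
    exact (continuousOn_const.sub continuousOn_id).sub (continuousOn_const.mul h1)
  have hLanti : StrictAntiOn L (Set.Icc 0 δ) := by
    intro a ha b hb hab
    have h1 : Ψ (a / δ) < Ψ (b / δ) :=
      hΨm (hmap01 ha) (hmap01 hb) (by exact div_lt_div_of_pos_right hab hδ0)
    have h2 : (0:ℝ) < 1 - δ := by linarith
    simp only [hLdef]
    nlinarith [mul_lt_mul_of_pos_left h1 h2]
  have hderiv : ∀ u ∈ Set.Ioo (0:ℝ) δ, HasDerivAt W (D u) u := by
    intro u hu
    have huδ : u / δ ∈ Set.Ioo (0:ℝ) 1 := ⟨div_pos hu.1 hδ0, (div_lt_one hδ0).2 hu.2⟩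
    obtain ⟨hdiff, _⟩ := hΨd _ huδ
    have h1 : HasDerivAt (fun x : ℝ => x / δ) (1 / δ) u := by
      simpa using (hasDerivAt_id u).div_const δ
    have h2 : HasDerivAt (fun x : ℝ => Ψ (x / δ)) (deriv Ψ (u / δ) * (1 / δ)) u :=
      (hdiff.hasDerivAt).comp u h1
    have ha : HasDerivAt (fun x : ℝ => 1 - x) (-1) u := by
      simpa using (hasDerivAt_id u).const_sub 1
    have hL' : HasDerivAt L (D u) u := ha.sub (h2.const_mul (1 - δ))
    have hev : W =ᶠ[nhds u] L := by
      filter_upwards [Iio_mem_nhds hu.2] with x hx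
      exact hWL x (le_of_lt hx)
    exact hL'.congr_of_eventuallyEq hev
  have hDneg : ∀ u ∈ Set.Ioo (0:ℝ) δ, D u < 0 := by
    intro u hu
    have huδ : u / δ ∈ Set.Ioo (0:ℝ) 1 := ⟨div_pos hu.1 hδ0, (div_lt_one hδ0).2 hu.2⟩
    obtain ⟨_, hpos⟩ := hΨd _ huδ
    have h1 : 0 < (1 - δ) * (deriv Ψ (u / δ) * (1 / δ)) :=
      mul_pos (by linarith) (mul_pos hpos (by positivity))
    simp only [hDdef]; linarith
  have hinv : ∀ u ∈ Set.Icc (0:ℝ) δ, vtInv W (W u) = u := by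
    intro u hu
    have hmem : u ∈ {u' | u' ∈ Set.Icc (0:ℝ) 1 ∧ W u' = W u} :=
      ⟨⟨hu.1, hu.2.trans hδ1.le⟩, rfl⟩
    have hlb : ∀ u' ∈ {u' | u' ∈ Set.Icc (0:ℝ) 1 ∧ W u' = W u}, u ≤ u' := by
      rintro u' ⟨hu', heq⟩
      by_cases h : u' ≤ δ
      · have hLe : L u' = L u := by rw [← hWL u' h, ← hWL u hu.2]; exact heq
        exact (hLanti.injOn ⟨hu'.1, h⟩ hu hLe).ge
      · push_neg at h; linarith [hu.2]
    exact IsLeast.csInf_eq ⟨hmem, hlb⟩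
  have himage : W '' Set.Ioo 0 δ = Set.Ioo 0 1 := by
    have hEq : Set.EqOn W L (Set.Ioo 0 δ) := fun u hu => hWL u hu.2.le
    rw [Set.image_congr hEq]
    apply Set.Subset.antisymm
    · rintro _ ⟨u, hu, rfl⟩
      constructor
      · have := hLanti ⟨hu.1.le, hu.2.le⟩ ⟨hδ0.le, le_refl δ⟩ hu.2
        rw [hLδ] at this; linarith
      · have := hLanti ⟨le_refl 0, hδ0.le⟩ ⟨hu.1.le, hu.2.le⟩ hu.1
        rw [hL0] at this; linarith
    · have h := intermediate_value_Ioo' hδ0.le hLc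
      rw [hL0, hLδ] at h
      exact h
  have hinj : Set.InjOn W (Set.Ioo 0 δ) := by
    intro a ha b hb h
    exact hLanti.injOn ⟨ha.1.le, ha.2.le⟩ ⟨hb.1.le, hb.2.le⟩
      (by rw [← hWL a ha.2.le, ← hWL b hb.2.le]; exact h)
  have key : (∫ v in Set.Icc (0:ℝ) 1, vtDelta W v) = δ := by
    rw [integral_Icc_eq_integral_Ioo, ← himage,
      integral_image_eq_integral_abs_deriv_smul measurableSet_Ioo
        (fun u hu => (hderiv u hu).hasDerivWithinAt) hinj]
    have hone : ∀ u ∈ Set.Ioo (0:ℝ) δ, |D u| • vtDelta W (W u) = 1 := by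
      intro u hu
      have hD := (hderiv u hu).deriv
      have h1 : vtInv W (W u) = u := hinv u ⟨hu.1.le, hu.2.le⟩
      have h2 : D u < 0 := hDneg u hu
      simp only [vtDelta, h1, hD, smul_eq_mul, abs_of_neg h2]
      field_simp
      exact div_self (ne_of_lt h2)
    rw [setIntegral_congr_fun measurableSet_Ioo hone]
    simp [Real.volume_Ioo, ENNReal.toReal_ofReal hδ0.le, hδ0.le]
  have hsurj : ∀ v ∈ Set.Icc (0:ℝ) 1, ∃ u ∈ Set.Icc (0:ℝ) δ, L u = v := by
    intro v hv
    have h := intermediate_value_Icc' hδ0.le hLc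
    rw [hL0, hLδ] at h
    obtain ⟨u, hu, hLu⟩ := h hv
    exact ⟨u, hu, hLu⟩
  have hw : ∀ v ∈ Set.Icc (0:ℝ) 1, vtInv W v ∈ Set.Icc (0:ℝ) δ ∧ L (vtInv W v) = v := by
    intro v hv
    obtain ⟨u, hu, hLu⟩ := hsurj v hv
    have hWu : W u = v := by rw [hWL u hu.2]; exact hLu
    have heq : vtInv W v = u := by rw [← hWu]; exact hinv u hu
    rw [heq]; exact ⟨hu, hLu⟩
  have hanti : AntitoneOn (vtInv W) (Set.Icc (0:ℝ) 1) := by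
    intro v1 h1 v2 h2 h12
    by_contra hcon
    push_neg at hcon
    obtain ⟨hm1, hL1⟩ := hw v1 h1
    obtain ⟨hm2, hL2⟩ := hw v2 h2
    have := hLanti hm1 hm2 hcon
    rw [hL1, hL2] at this
    linarith
  have hwae : AEMeasurable (vtInv W) (volume.restrict (Set.Icc (0:ℝ) 1)) :=
    aemeasurable_restrict_of_antitoneOn measurableSet_Icc hanti
  have hΔae : AEStronglyMeasurable (vtDelta W) (volume.restrict (Set.Icc (0:ℝ) 1)) := by
    have h1 : AEMeasurable (fun v => deriv W (vtInv W v)) (volume.restrict (Set.Icc (0:ℝ) 1)) :=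
      (measurable_deriv W).comp_aemeasurable hwae
    exact (aemeasurable_const.div h1).aestronglyMeasurable
  refine ⟨key, ?_⟩
  intro Ω _ P hP V hV hmap
  have h := (integral_map (f := vtDelta W) hV.aemeasurable (by rw [hmap]; exact hΔae)).symm
  rw [h, hmap]
  exact key
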